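/- Suppose E is a subspace of a real Banach lattice X doing C-stable phase retrieval. If F is a subspace of X such that for every x ∈ F with ‖x‖ ≤ 1 there is x' ∈ E with ‖x - x'‖ < δ, where δ satisfies 1/C' := (1/C)(1/√2 - 2δ) - 2δ > 0, then F does C'-stable phase retrieval. -/

import Mathlib

open Filter

section AuxLattice

variable {α : Type*} [Lattice α] [AddCommGroup α] [AddLeftMono α] [AddRightMono α]

private lemma helper_inf_add (x y : α) : (x + y) ⊓ (x - y) = x - |y| := by
  rw [abs, sub_eq_add_neg x y, sub_eq_add_neg, neg_sup, neg_neg, inf_comm (-y) y, ← add_inf]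

/-- The hard direction of the lattice identity `|a+b| ⊓ |a-b| = ||a|-|b||`. -/
private lemma inf_abs_le (a b : α) : |a + b| ⊓ |a - b| ≤ |(|a| - |b|)| := by
  letI : DistribLattice α := AddCommGroup.toDistribLattice α
  have r1 : a - |b| ≤ |(|a| - |b|)| :=
    le_trans (sub_le_sub_right (le_abs_self a) _) (le_abs_self _)
  have r4 : -a - |b| ≤ |(|a| - |b|)| :=
    le_trans (sub_le_sub_right (neg_le_abs a) _) (le_abs_self _)
  have r2 : b - |a| ≤ |(|a| - |b|)| := by
    refine le_trans (sub_le_sub_right (le_abs_self b) _) ?_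
    rw [← neg_sub |a| |b|]
    exact neg_le_abs _
  have r3 : -b - |a| ≤ |(|a| - |b|)| := by
    refine le_trans (sub_le_sub_right (neg_le_abs b) _) ?_
    rw [← neg_sub |a| |b|]
    exact neg_le_abs _
  have t1 : (a + b) ⊓ (a - b) ≤ |(|a| - |b|)| := (helper_inf_add a b).le.trans r1
  have t2 : (a + b) ⊓ (-(a - b)) ≤ |(|a| - |b|)| := by
    have e2 : (a + b) ⊓ (-(a - b)) = (b + a) ⊓ (b - a) := by congr 1 <;> abel
    rw [e2, helper_inf_add b a]; exact r2
  have t3 : (-(a + b)) ⊓ (a - b) ≤ |(|a| - |b|)| := by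
    have e3 : (-(a + b)) ⊓ (a - b) = (-b + a) ⊓ (-b - a) := by
      rw [inf_comm]; congr 1 <;> abel
    rw [e3, helper_inf_add (-b) a]; exact r3
  have t4 : (-(a + b)) ⊓ (-(a - b)) ≤ |(|a| - |b|)| := by
    have e4 : (-(a + b)) ⊓ (-(a - b)) = (-a + b) ⊓ (-a - b) := by
      rw [inf_comm]; congr 1 <;> abel
    rw [e4, helper_inf_add (-a) b]; exact r4
  calc |a + b| ⊓ |a - b| = ((a + b) ⊔ -(a + b)) ⊓ ((a - b) ⊔ -(a - b)) := by rw [abs, abs]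
    _ ≤ _ := by
        refine le_trans (inf_sup_right _ _ _).le ?_
        refine sup_le (le_trans (inf_sup_left _ _ _).le (sup_le t1 t2))
          (le_trans (inf_sup_left _ _ _).le (sup_le t3 t4))

/-- In a lattice ordered group, `0 ≤ y + y` implies `0 ≤ y`. -/
private lemma half_nonneg' {y : α} (hy : 0 ≤ y + y) : 0 ≤ y := by
  have key : y ⊓ 0 + y ⊓ 0 = y ⊓ 0 := by
    calc y ⊓ 0 + y ⊓ 0 = (y ⊓ 0 + y) ⊓ (y ⊓ 0 + 0) := add_inf y 0 (y ⊓ 0)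
      _ = (y + y ⊓ 0) ⊓ (y ⊓ 0) := by rw [add_zero, add_comm (y ⊓ 0) y]
      _ = ((y + y) ⊓ (y + 0)) ⊓ (y ⊓ 0) := by rw [add_inf]
      _ = ((y + y) ⊓ y) ⊓ (y ⊓ 0) := by rw [add_zero]
      _ = (y + y) ⊓ (y ⊓ (y ⊓ 0)) := inf_assoc _ _ _
      _ = (y + y) ⊓ (y ⊓ 0) := by rw [inf_left_idem]
      _ = y ⊓ 0 := inf_eq_right.mpr (le_trans inf_le_right hy)
  have h0 : y ⊓ 0 = 0 := by
    have : y ⊓ 0 + y ⊓ 0 = y ⊓ 0 + 0 := by rw [key, add_zero]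
    exact add_left_cancel this
  exact inf_eq_right.mp h0

end AuxLattice

section AuxSmul

variable {X : Type*} [NormedAddCommGroup X] [Lattice X]
    [HasSolidNorm X] [IsOrderedAddMonoid X] [NormedSpace ℝ X]

private lemma isClosed_nonneg'' : IsClosed {y : X | 0 ≤ y} := by
  have h : {y : X | 0 ≤ y} = (fun y : X => y⁻) ⁻¹' {0} := by
    ext y
    simp [negPart_eq_zero]
  rw [h]
  exact isClosed_singleton.preimage continuous_negPart

private lemma real_smul_nonneg' {c : ℝ} (hc : 0 ≤ c) {x : X} (hx : 0 ≤ x) : 0 ≤ c • x := by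
  have hdyadic : ∀ (k n : ℕ), (0 : X) ≤ ((k : ℝ) / 2 ^ n) • x := by
    intro k n
    induction n with
    | zero =>
      have h0 : (0 : X) ≤ (k : ℝ) • x := by
        rw [Nat.cast_smul_eq_nsmul]
        exact nsmul_nonneg hx k
      simpa using h0
    | succ n ih =>
      apply half_nonneg'
      have e : ((k : ℝ) / 2 ^ (n + 1)) • x + ((k : ℝ) / 2 ^ (n + 1)) • x
          = ((k : ℝ) / 2 ^ n) • x := by
        rw [← add_smul]
        congr 1
        field_simp
        ring
      rw [e]
      exact ih
  have h2 : ∀ n : ℕ, (0 : ℝ) < 2 ^ n := fun n => by positivity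
  have htend : Tendsto (fun n : ℕ => ((⌊c * 2 ^ n⌋₊ : ℝ) / 2 ^ n : ℝ)) atTop (nhds c) := by
    refine tendsto_of_tendsto_of_tendsto_of_le_of_le
      (g := fun n : ℕ => c - (1 / 2 : ℝ) ^ n) (h := fun _ : ℕ => c) ?_ ?_ ?_ ?_
    · have hp : Tendsto (fun n : ℕ => ((1 / 2 : ℝ)) ^ n) atTop (nhds 0) :=
        tendsto_pow_atTop_nhds_zero_of_lt_one (by norm_num) (by norm_num)
      simpa using tendsto_const_nhds.sub hp
    · exact tendsto_const_nhds
    · intro n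
      show c - (1 / 2 : ℝ) ^ n ≤ (⌊c * 2 ^ n⌋₊ : ℝ) / 2 ^ n
      have hf := Nat.sub_one_lt_floor (c * 2 ^ n)
      have e : c - (1 / 2 : ℝ) ^ n = (c * 2 ^ n - 1) / 2 ^ n := by
        field_simp
        rw [sub_mul, ← mul_pow]; norm_num
      rw [e]
      have hf' := hf.le
      gcongr
    · intro n
      show (⌊c * 2 ^ n⌋₊ : ℝ) / 2 ^ n ≤ c
      have h0 : (0 : ℝ) ≤ c * 2 ^ n := by positivity
      calc ((⌊c * 2 ^ n⌋₊ : ℝ)) / 2 ^ n ≤ (c * 2 ^ n) / 2 ^ n := by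
            gcongr
            exact Nat.floor_le h0
        _ = c := by field_simp
  have hmem : ∀ n : ℕ, (fun n : ℕ => ((⌊c * 2 ^ n⌋₊ : ℝ) / 2 ^ n : ℝ) • x) n ∈ {y : X | 0 ≤ y} :=
    fun n => hdyadic _ n
  exact (isClosed_nonneg'').mem_of_tendsto (htend.smul_const x) (Eventually.of_forall hmem)

private lemma real_smul_mono' {c : ℝ} (hc : 0 ≤ c) {a b : X} (h : a ≤ b) : c • a ≤ c • b := by
  have h0 := real_smul_nonneg' hc (sub_nonneg.mpr h)
  rw [smul_sub] at h0
  exact sub_nonneg.mp h0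

private lemma abs_smul_le' {c : ℝ} (hc : 0 ≤ c) (x : X) : |c • x| ≤ c • |x| := by
  rw [abs_le']
  refine ⟨real_smul_mono' hc (le_abs_self x), ?_⟩
  rw [← smul_neg]
  exact real_smul_mono' hc (neg_le_abs x)

private lemma abs_real_smul' {c : ℝ} (hc : 0 ≤ c) (x : X) : |c • x| = c • |x| := by
  rcases hc.eq_or_lt with rfl | hc'
  · simp
  refine le_antisymm (abs_smul_le' hc x) ?_
  have h := abs_smul_le' (inv_nonneg.mpr hc) (c • x)
  rw [inv_smul_smul₀ hc'.ne'] at h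
  have h2 := real_smul_mono' hc h
  rwa [smul_inv_smul₀ hc'.ne'] at h2

end AuxSmul

/-- Key step: for `u, v ∈ F` with `‖u‖ ≤ ‖v‖`, `‖u‖ ≤ C' * ‖|u| ⊓ |v|‖`. -/
private lemma SPR_key {X : Type*} [NormedAddCommGroup X] [Lattice X]
    [HasSolidNorm X] [IsOrderedAddMonoid X]
    [NormedSpace ℝ X] (E F : Submodule ℝ X) (C C' δ : ℝ) (hC : 1 ≤ C) (hδ : 0 < δ)
    (hSPR : ∀ f ∈ E, ∀ g ∈ E, min ‖f - g‖ ‖f + g‖ ≤ C * ‖|f| - |g|‖)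
    (happrox : ∀ x ∈ F, ‖x‖ ≤ 1 → ∃ x' ∈ E, ‖x - x'‖ < δ)
    (hpos : 0 < (1 / C) * (1 / Real.sqrt 2 - 2 * δ) - 2 * δ)
    (hC' : 1 / C' = (1 / C) * (1 / Real.sqrt 2 - 2 * δ) - 2 * δ)
    {u v : X} (hu : u ∈ F) (hv : v ∈ F) (huv : ‖u‖ ≤ ‖v‖) :
    ‖u‖ ≤ C' * ‖|u| ⊓ |v|‖ := by
  have hCpos : (0 : ℝ) < C := lt_of_lt_of_le one_pos hC
  have hC'pos : (0 : ℝ) < C' := one_div_pos.mp (by rw [hC']; exact hpos)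
  rcases (norm_nonneg u).eq_or_lt with hm | hm
  · rw [← hm]
    exact mul_nonneg hC'pos.le (norm_nonneg _)
  have hvpos : (0 : ℝ) < ‖v‖ := lt_of_lt_of_le hm huv
  set u1 : X := ‖u‖⁻¹ • u with hu1def
  set v1 : X := ‖v‖⁻¹ • v with hv1def
  have hu1 : ‖u1‖ = 1 := by
    rw [hu1def, norm_smul, Real.norm_eq_abs, abs_of_nonneg (by positivity),
      inv_mul_cancel₀ hm.ne']
  have hv1 : ‖v1‖ = 1 := by
    rw [hv1def, norm_smul, Real.norm_eq_abs, abs_of_nonneg (by positivity),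
      inv_mul_cancel₀ hvpos.ne']
  obtain ⟨e1, he1E, he1⟩ := happrox u1 (F.smul_mem _ hu) hu1.le
  obtain ⟨e2, he2E, he2⟩ := happrox v1 (F.smul_mem _ hv) hv1.le
  set x : X := (2 : ℝ)⁻¹ • (e1 + e2) with hxdef
  set y : X := (2 : ℝ)⁻¹ • (e1 - e2) with hydef
  have hxE : x ∈ E := E.smul_mem _ (E.add_mem he1E he2E)
  have hyE : y ∈ E := E.smul_mem _ (E.sub_mem he1E he2E)
  have hxy1 : x + y = e1 := by rw [hxdef, hydef]; module
  have hxy2 : x - y = e2 := by rw [hxdef, hydef]; module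
  have hs := hSPR x hxE y hyE
  rw [hxy1, hxy2] at hs
  -- hs : min ‖e2‖ ‖e1‖ ≤ C * ‖|x| - |y|‖
  have habs : ‖|x| - |y|‖ ≤ ‖|e1| ⊓ |e2|‖ := by
    rw [← norm_abs_eq_norm (|x| - |y|)]
    refine HasSolidNorm.solid ?_
    rw [abs_abs, abs_of_nonneg (le_inf (abs_nonneg e1) (abs_nonneg e2))]
    refine le_inf ?_ ?_
    · have h := abs_abs_sub_abs_le x (-y)
      rw [abs_neg, sub_neg_eq_add, hxy1] at h
      exact h
    · have h := abs_abs_sub_abs_le x y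
      rw [hxy2] at h
      exact h
  have h1 : 1 - δ ≤ min ‖e2‖ ‖e1‖ := by
    have a1 : 1 - δ ≤ ‖e1‖ := by
      have hne := norm_sub_norm_le u1 e1
      rw [hu1] at hne
      linarith [he1]
    have a2 : 1 - δ ≤ ‖e2‖ := by
      have hne := norm_sub_norm_le v1 e2
      rw [hv1] at hne
      linarith [he2]
    exact le_min a2 a1
  have h2 : ‖|e1| ⊓ |e2|‖ ≤ ‖|u1| ⊓ |v1|‖ + 2 * δ := by
    have t := norm_inf_sub_inf_le_add_norm |e1| |e2| |u1| |v1|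
    have n1 : ‖|e1| - |u1|‖ ≤ ‖e1 - u1‖ := norm_abs_sub_abs _ _
    have n2 : ‖|e2| - |v1|‖ ≤ ‖e2 - v1‖ := norm_abs_sub_abs _ _
    have tri := norm_sub_norm_le (|e1| ⊓ |e2|) (|u1| ⊓ |v1|)
    have r1 : ‖e1 - u1‖ = ‖u1 - e1‖ := norm_sub_rev _ _
    have r2 : ‖e2 - v1‖ = ‖v1 - e2‖ := norm_sub_rev _ _
    have := he1
    have := he2
    linarith
  have h3 : ‖|u1| ⊓ |v1|‖ ≤ ‖u‖⁻¹ * ‖|u| ⊓ |v|‖ := by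
    have w0 : (0 : X) ≤ |u1| ⊓ |v1| := le_inf (abs_nonneg _) (abs_nonneg _)
    have habs_u : |u1| = ‖u‖⁻¹ • |u| := by
      rw [hu1def]; exact abs_real_smul' (by positivity) u
    have habs_v : |v1| = ‖v‖⁻¹ • |v| := by
      rw [hv1def]; exact abs_real_smul' (by positivity) v
    have key : ‖u‖ • (|u1| ⊓ |v1|) ≤ |u| ⊓ |v| := by
      refine le_inf ?_ ?_
      · calc ‖u‖ • (|u1| ⊓ |v1|) ≤ ‖u‖ • |u1| := real_smul_mono' hm.le inf_le_left
          _ = |u| := by rw [habs_u, smul_smul, mul_inv_cancel₀ hm.ne', one_smul]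
      · calc ‖u‖ • (|u1| ⊓ |v1|) ≤ ‖u‖ • |v1| := real_smul_mono' hm.le inf_le_right
          _ = (‖u‖ * ‖v‖⁻¹) • |v| := by rw [habs_v, smul_smul]
          _ ≤ |v| := by
              have hcoef : (0 : ℝ) ≤ 1 - ‖u‖ * ‖v‖⁻¹ := by
                have : ‖u‖ * ‖v‖⁻¹ ≤ 1 := by
                  rw [← div_eq_mul_inv, div_le_one hvpos]
                  exact huv
                linarith
              have hp := real_smul_nonneg' hcoef (abs_nonneg v)
              rw [sub_smul, one_smul] at hp
              exact sub_nonneg.mp hp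
    have hnorm : ‖‖u‖ • (|u1| ⊓ |v1|)‖ ≤ ‖|u| ⊓ |v|‖ := by
      refine HasSolidNorm.solid ?_
      rw [abs_of_nonneg (real_smul_nonneg' hm.le w0),
        abs_of_nonneg (le_inf (abs_nonneg u) (abs_nonneg v))]
      exact key
    rw [norm_smul, Real.norm_eq_abs, abs_of_nonneg hm.le] at hnorm
    calc ‖|u1| ⊓ |v1|‖ = ‖u‖⁻¹ * (‖u‖ * ‖|u1| ⊓ |v1|‖) := by
          rw [← mul_assoc, inv_mul_cancel₀ hm.ne', one_mul]
      _ ≤ ‖u‖⁻¹ * ‖|u| ⊓ |v|‖ := by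
          exact mul_le_mul_of_nonneg_left hnorm (by positivity)
  -- combine
  have hsqrt : (1 : ℝ) ≤ Real.sqrt 2 := Real.one_le_sqrt.mpr one_le_two
  have hs2pos : (0 : ℝ) < Real.sqrt 2 := lt_of_lt_of_le one_pos hsqrt
  have big : 1 - δ ≤ C * (‖u‖⁻¹ * ‖|u| ⊓ |v|‖ + 2 * δ) := by
    calc 1 - δ ≤ min ‖e2‖ ‖e1‖ := h1
      _ ≤ C * ‖|x| - |y|‖ := hs
      _ ≤ C * (‖u‖⁻¹ * ‖|u| ⊓ |v|‖ + 2 * δ) := by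
          refine mul_le_mul_of_nonneg_left ?_ hCpos.le
          linarith [habs, h2, h3]
  have b1 : (1 - δ) / C - 2 * δ ≤ ‖u‖⁻¹ * ‖|u| ⊓ |v|‖ := by
    have hb : (1 - δ) / C ≤ ‖u‖⁻¹ * ‖|u| ⊓ |v|‖ + 2 * δ := by
      rw [div_le_iff₀ hCpos, mul_comm]
      exact big
    linarith
  have comp : (1 / C) * (1 / Real.sqrt 2 - 2 * δ) - 2 * δ ≤ (1 - δ) / C - 2 * δ := by
    have h7 : 1 / Real.sqrt 2 ≤ 1 := by
      rw [div_le_one hs2pos]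
      exact hsqrt
    have hmm : (1 / C) * (1 / Real.sqrt 2 - 2 * δ) ≤ (1 / C) * (1 - δ) := by
      refine mul_le_mul_of_nonneg_left (by linarith) (by positivity)
    have : (1 / C) * (1 - δ) = (1 - δ) / C := by ring
    linarith
  have hA : ‖u‖ * (1 / C') ≤ ‖|u| ⊓ |v|‖ := by
    rw [hC']
    have step : ‖u‖ * ((1 / C) * (1 / Real.sqrt 2 - 2 * δ) - 2 * δ)
        ≤ ‖u‖ * (‖u‖⁻¹ * ‖|u| ⊓ |v|‖) :=
      mul_le_mul_of_nonneg_left (le_trans comp b1) hm.le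
    rwa [← mul_assoc, mul_inv_cancel₀ hm.ne', one_mul] at step
  rw [mul_one_div, div_le_iff₀ hC'pos] at hA
  rw [mul_comm] at hA
  exact hA

/-- Stability of SPR under one-sided Hausdorff-distance perturbation: if `E` does
`C`-stable phase retrieval and every unit-ball element of `F` is within `δ` of `E`,
where `1/C' = (1/C)(1/√2 - 2δ) - 2δ > 0`, then `F` does `C'`-stable phase retrieval. -/
theorem SPR_stable_under_perturbation {X : Type*} [NormedAddCommGroup X] [Lattice X]
    [HasSolidNorm X] [IsOrderedAddMonoid X]
    [NormedSpace ℝ X] (E F : Submodule ℝ X) (C C' δ : ℝ) (hC : 1 ≤ C) (hδ : 0 < δ)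
    (hSPR : ∀ f ∈ E, ∀ g ∈ E, min ‖f - g‖ ‖f + g‖ ≤ C * ‖|f| - |g|‖)
    (happrox : ∀ x ∈ F, ‖x‖ ≤ 1 → ∃ x' ∈ E, ‖x - x'‖ < δ)
    (hpos : 0 < (1 / C) * (1 / Real.sqrt 2 - 2 * δ) - 2 * δ)
    (hC' : 1 / C' = (1 / C) * (1 / Real.sqrt 2 - 2 * δ) - 2 * δ) :
    ∀ f ∈ F, ∀ g ∈ F, min ‖f - g‖ ‖f + g‖ ≤ C' * ‖|f| - |g|‖ := by
  intro f hf g hg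
  have hC'pos : (0 : ℝ) < C' := one_div_pos.mp (by rw [hC']; exact hpos)
  have hbound : ‖|f - g| ⊓ |f + g|‖ ≤ ‖|f| - |g|‖ := by
    rw [← norm_abs_eq_norm (|f| - |g|)]
    refine HasSolidNorm.solid ?_
    rw [abs_abs, abs_of_nonneg (le_inf (abs_nonneg _) (abs_nonneg _))]
    rw [inf_comm]
    exact inf_abs_le f g
  rcases le_total ‖f - g‖ ‖f + g‖ with h | h
  · rw [min_eq_left h]
    calc ‖f - g‖ ≤ C' * ‖|f - g| ⊓ |f + g|‖ :=
          SPR_key E F C C' δ hC hδ hSPR happrox hpos hC' (F.sub_mem hf hg) (F.add_mem hf hg) h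
      _ ≤ C' * ‖|f| - |g|‖ := mul_le_mul_of_nonneg_left hbound hC'pos.le
  · rw [min_eq_right h]
    calc ‖f + g‖ ≤ C' * ‖|f + g| ⊓ |f - g|‖ :=
          SPR_key E F C C' δ hC hδ hSPR happrox hpos hC' (F.add_mem hf hg) (F.sub_mem hf hg) h
      _ ≤ C' * ‖|f| - |g|‖ := by
          rw [inf_comm]
          exact mul_le_mul_of_nonneg_left hbound hC'pos.le
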